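/- Fix $\gamma \in (0,1)$, $\epsilon \in (0,1)$, $C > 1$ with $Cp \le 1 - \epsilon$ for some $p > 0$. Define $C_1 = C$ and $C_{j+1} = C_j(1 + \gamma(1-\gamma)^{j-1}\epsilon)$ for $j \ge 1$. Then for all $j \ge 1$, $1 - C_j p \ge (1 - Cp)(1-\gamma)^{j-1}$. -/
import Mathlib


/-- With `C₁ = C` and `C_{j+1} = C_j (1 + γ(1-γ)^(j-1) ε)`, if `Cp ≤ 1 - ε` then
`1 - C_j p ≥ (1 - Cp)(1-γ)^(j-1)` for all `j ≥ 1`. -/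
theorem stage_constant_lower_bound (γ ε C p : ℝ)
    (hγ : γ ∈ Set.Ioo (0 : ℝ) 1) (hε : ε ∈ Set.Ioo (0 : ℝ) 1)
    (hC : 1 < C) (hp : 0 < p) (hCp : C * p ≤ 1 - ε)
    (Cs : ℕ → ℝ) (h1 : Cs 1 = C)
    (hrec : ∀ j : ℕ, 1 ≤ j → Cs (j + 1) = Cs j * (1 + γ * (1 - γ) ^ (j - 1) * ε)) :
    ∀ j : ℕ, 1 ≤ j → 1 - Cs j * p ≥ (1 - C * p) * (1 - γ) ^ (j - 1) := by
  obtain ⟨hγ0, hγ1⟩ := hγ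
  obtain ⟨hε0, hε1⟩ := hε
  have key : ∀ j : ℕ, 1 ≤ j → Cs j * p ≤ 1 - ε * (1 - γ) ^ (j - 1) := by
    intro j hj
    induction j, hj using Nat.le_induction with
    | base => simpa [h1] using hCp
    | succ n hn ih =>
      obtain ⟨m, rfl⟩ := Nat.exists_eq_succ_of_ne_zero (Nat.one_le_iff_ne_zero.mp hn)
      rw [hrec _ hn]
      simp only [Nat.succ_eq_add_one, Nat.add_sub_cancel] at *
      set a := (1 - γ) ^ m with ha
      have ha0 : 0 ≤ a := pow_nonneg (by linarith) m
      have ha1 : a ≤ 1 := pow_le_one₀ (by linarith) (by linarith)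
      have hpow : (1 - γ) ^ (m + 1) = a * (1 - γ) := by rw [pow_succ]
      rw [hpow]
      have hfac : (0:ℝ) ≤ 1 + γ * a * ε := by positivity
      have h2 : (Cs (m + 1) * p) * (1 + γ * a * ε) ≤ (1 - ε * a) * (1 + γ * a * ε) :=
        mul_le_mul_of_nonneg_right ih hfac
      nlinarith [mul_nonneg (mul_nonneg hγ0.le (mul_nonneg hε0.le hε0.le))
        (mul_nonneg ha0 ha0)]
  intro j hj
  induction j, hj using Nat.le_induction with
  | base => simp [h1]
  | succ n hn ih =>
    obtain ⟨m, rfl⟩ := Nat.exists_eq_succ_of_ne_zero (Nat.one_le_iff_ne_zero.mp hn)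
    have hx := key (m + 1) hn
    rw [hrec _ hn]
    simp only [Nat.succ_eq_add_one, Nat.add_sub_cancel] at *
    set a := (1 - γ) ^ m with ha
    have ha0 : 0 ≤ a := pow_nonneg (by linarith) m
    have ha1 : a ≤ 1 := pow_le_one₀ (by linarith) (by linarith)
    have hpow : (1 - γ) ^ (m + 1) = a * (1 - γ) := by rw [pow_succ]
    rw [hpow]
    have hq : 1 - Cs (m + 1) * p ≥ ε * a := by linarith
    have hx1 : Cs (m + 1) * p ≤ 1 := by nlinarith [mul_nonneg hε0.le ha0]
    nlinarith [mul_nonneg (mul_nonneg hγ0.le hε0.le) ha0,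
      mul_le_mul_of_nonneg_left hx1 (mul_nonneg (mul_nonneg hγ0.le hε0.le) ha0),
      mul_le_mul_of_nonneg_left hq hγ0.le]
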